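/- Let ξ_1, ξ_2, … be a swap-invariant sequence of integrable random variables, and assume that either (a) ξ_k ≠ 0 almost surely for some k ≥ 1, or (b) the sequence (ξ_n) is uniformly integrable. Then the almost sure limit X of n^{-1}(ξ_1 + ⋯ + ξ_n) also holds in L^1, i.e. E|n^{-1}(ξ_1 + ⋯ + ξ_n) - X| → 0 as n → ∞. -/

import Mathlib

open MeasureTheory ProbabilityTheory Filter

open Topology

/-- A sequence of integrable random variables is *swap-invariant* if each of its
finite subvectors is zonoid equivalent to every coordinate permutation of itself. -/
def SwapInvariant {Ω : Type*} [MeasureSpace Ω] (ξ : ℕ → Ω → ℝ) : Prop :=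
  ∀ (n : ℕ) (k : Fin n → ℕ), StrictMono k →
    ∀ (σ : Equiv.Perm (Fin n)) (u : Fin n → ℝ),
      ∫ ω, |∑ i, u i * ξ (k i) ω| = ∫ ω, |∑ i, u i * ξ (k (σ i)) ω|

section Aux

/- ### Pointwise real lemmas -/

private lemma pw1 (v b : ℝ) : max (|v| - |b|) 0 = (|v + b| + |v - b|) / 2 - |b| := by
  rcases abs_cases (v+b) with ⟨h1,h1'⟩|⟨h1,h1'⟩ <;>
  rcases abs_cases (v-b) with ⟨h2,h2'⟩|⟨h2,h2'⟩ <;>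
  rcases abs_cases v with ⟨h3,h3'⟩|⟨h3,h3'⟩ <;>
  rcases abs_cases b with ⟨h4,h4'⟩|⟨h4,h4'⟩ <;>
  rcases max_cases (|v| - |b|) 0 with ⟨h5,h5'⟩|⟨h5,h5'⟩ <;> linarith

private lemma pw2 (x y M : ℝ) : max (x - M) 0 ≤ max (x - y) 0 + max (y - M) 0 := by
  have h1 : x - y ≤ max (x - y) 0 := le_max_left _ _
  have h2 : y - M ≤ max (y - M) 0 := le_max_left _ _
  have h3 : (0:ℝ) ≤ max (x - y) 0 := le_max_right _ _
  have h4 : (0:ℝ) ≤ max (y - M) 0 := le_max_right _ _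
  rcases max_cases (x - M) 0 with ⟨h,h'⟩|⟨h,h'⟩ <;> linarith

private lemma pw3 (a x M : ℝ) :
    |a - x| ≤ min (|a - x|) (2*M) + max (|a| - M) 0 + max (|x| - M) 0 := by
  rcases le_total (|a - x|) (2*M) with h|h
  · have h1 : 0 ≤ max (|a| - M) 0 := le_max_right _ _
    have h2 : 0 ≤ max (|x| - M) 0 := le_max_right _ _
    rw [min_eq_left h]; linarith
  · rw [min_eq_right h]
    have h1 : |a| - M ≤ max (|a| - M) 0 := le_max_left _ _
    have h2 : |x| - M ≤ max (|x| - M) 0 := le_max_left _ _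
    have h3 : |a - x| ≤ |a| + |x| := abs_sub _ _
    linarith

private lemma pwJ {n : ℕ} (hn : 1 ≤ n) (x : ℕ → ℝ) (c : ℝ) :
    max (|(n:ℝ)⁻¹ * ∑ i ∈ Finset.range n, x i| - c) 0
      ≤ (n:ℝ)⁻¹ * ∑ i ∈ Finset.range n, max (|x i| - c) 0 := by
  have hn0 : (0:ℝ) < n := by exact_mod_cast Nat.pos_of_ne_zero (by omega)
  have hrhs : (0:ℝ) ≤ (n:ℝ)⁻¹ * ∑ i ∈ Finset.range n, max (|x i| - c) 0 := by
    apply mul_nonneg (by positivity)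
    exact Finset.sum_nonneg fun i _ => le_max_right _ _
  rcases max_cases (|(n:ℝ)⁻¹ * ∑ i ∈ Finset.range n, x i| - c) 0 with ⟨h,h'⟩|⟨h,h'⟩
  · rw [h]
    have h1 : |(n:ℝ)⁻¹ * ∑ i ∈ Finset.range n, x i|
        ≤ (n:ℝ)⁻¹ * ∑ i ∈ Finset.range n, |x i| := by
      rw [abs_mul, abs_of_nonneg (by positivity : (0:ℝ) ≤ (n:ℝ)⁻¹)]
      gcongr
      exact Finset.abs_sum_le_sum_abs _ _
    have h2 : (n:ℝ)⁻¹ * ∑ i ∈ Finset.range n, |x i| - c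
        = (n:ℝ)⁻¹ * ∑ i ∈ Finset.range n, (|x i| - c) := by
      rw [Finset.sum_sub_distrib, Finset.sum_const, Finset.card_range, mul_sub]
      field_simp
      rw [nsmul_eq_mul]
    have h3 : (n:ℝ)⁻¹ * ∑ i ∈ Finset.range n, (|x i| - c)
        ≤ (n:ℝ)⁻¹ * ∑ i ∈ Finset.range n, max (|x i| - c) 0 := by
      gcongr with i hi
      exact le_max_left _ _
    linarith
  · rw [h]; exact hrhs

/- ### Swap-invariance for pairs -/

private lemma sm3 {x y z : ℕ} (h1 : x < y) (h2 : y < z) : StrictMono ![x,y,z] := by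
  intro a b hab
  fin_cases a <;> fin_cases b <;> simp_all <;> omega

private lemma swap_pair {Ω : Type*} [MeasureSpace Ω] {ξ : ℕ → Ω → ℝ} (hswap : SwapInvariant ξ)
    {i j k : ℕ} (hik : i ≠ k) (hjk : j ≠ k) (hij : i ≠ j) (a b : ℝ) :
    ∫ ω, |a * ξ i ω + b * ξ k ω| = ∫ ω, |a * ξ j ω + b * ξ k ω| := by
  rcases Nat.lt_or_ge i j with hij' | hij'
  · rcases Nat.lt_or_ge k i with hk | hk
    · have := hswap 3 ![k,i,j] (sm3 hk hij') (Equiv.swap 1 2) ![b,a,0]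
      simpa [Fin.sum_univ_three, Equiv.swap_apply_def, add_comm] using this
    · have hk' : i < k := lt_of_le_of_ne hk hik
      rcases Nat.lt_or_ge k j with hk2 | hk2
      · have := hswap 3 ![i,k,j] (sm3 hk' hk2) (Equiv.swap 0 2) ![a,b,0]
        simpa [Fin.sum_univ_three, Equiv.swap_apply_def, add_comm] using this
      · have hk3 : j < k := lt_of_le_of_ne hk2 hjk
        have := hswap 3 ![i,j,k] (sm3 hij' hk3) (Equiv.swap 0 1) ![a,0,b]
        simpa [Fin.sum_univ_three, Equiv.swap_apply_def] using this
  · have hji : j < i := lt_of_le_of_ne hij' (Ne.symm hij)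
    rcases Nat.lt_or_ge k j with hk | hk
    · have := hswap 3 ![k,j,i] (sm3 hk hji) (Equiv.swap 1 2) ![b,a,0]
      simpa [Fin.sum_univ_three, Equiv.swap_apply_def, add_comm] using this.symm
    · have hk' : j < k := lt_of_le_of_ne hk hjk
      rcases Nat.lt_or_ge k i with hk2 | hk2
      · have := hswap 3 ![j,k,i] (sm3 hk' hk2) (Equiv.swap 0 2) ![a,b,0]
        simpa [Fin.sum_univ_three, Equiv.swap_apply_def, add_comm] using this.symm
      · have hk3 : i < k := lt_of_le_of_ne hk2 hik
        have := hswap 3 ![j,i,k] (sm3 hji hk3) (Equiv.swap 0 1) ![a,0,b]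
        simpa [Fin.sum_univ_three, Equiv.swap_apply_def] using this.symm

variable {Ω : Type*} [MeasureSpace Ω] [IsProbabilityMeasure (ℙ : Measure Ω)]

/- ### Integral identity for positive parts -/

private lemma int_identity {f g : Ω → ℝ} (hf : Integrable f) (hg : Integrable g)
    {t : ℝ} (ht : 0 ≤ t) :
    ∫ ω, max (|f ω| - t * |g ω|) 0
      = ((∫ ω, |f ω + t * g ω|) + ∫ ω, |f ω - t * g ω|) / 2 - t * ∫ ω, |g ω| := by
  have h1 : Integrable (fun ω => |f ω + t * g ω|) := (hf.add (hg.const_mul t)).abs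
  have h2 : Integrable (fun ω => |f ω - t * g ω|) := (hf.sub (hg.const_mul t)).abs
  have h3 : Integrable (fun ω => |g ω|) := hg.abs
  have hpt : ∀ ω, max (|f ω| - t * |g ω|) 0
      = (|f ω + t * g ω| + |f ω - t * g ω|) / 2 - t * |g ω| := by
    intro ω
    have := pw1 (f ω) (t * g ω)
    rwa [abs_mul, abs_of_nonneg ht] at this
  calc ∫ ω, max (|f ω| - t * |g ω|) 0
      = ∫ ω, ((|f ω + t * g ω| + |f ω - t * g ω|) / 2 - t * |g ω|) :=
        integral_congr_ae (Eventually.of_forall hpt)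
    _ = ((∫ ω, |f ω + t * g ω|) + ∫ ω, |f ω - t * g ω|) / 2 - t * ∫ ω, |g ω| := by
        have h12 : Integrable (fun ω => (|f ω + t * g ω| + |f ω - t * g ω|) / 2) :=
          (h1.add h2).div_const 2
        have h3t : Integrable (fun ω => t * |g ω|) := h3.const_mul t
        rw [integral_sub h12 h3t, integral_div, integral_add h1 h2,
          MeasureTheory.integral_const_mul]

/- ### Tail integrals tend to zero -/

private lemma tendsto_tail {f c : Ω → ℝ} (hf : Integrable f)
    (hfm : AEMeasurable f) (hcm : AEMeasurable c) (hc0 : ∀ᵐ ω, 0 < c ω) :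
    Tendsto (fun t : ℕ => ∫ ω, max (f ω - t * c ω) 0) atTop (𝓝 0) := by
  have main := tendsto_integral_of_dominated_convergence (μ := ℙ)
      (F := fun (t : ℕ) ω => max (f ω - t * c ω) 0) (f := fun _ => (0:ℝ))
      (bound := fun ω => |f ω|) ?_ ?_ ?_ ?_
  · simpa using main
  · intro t
    exact ((hfm.sub (hcm.const_mul t)).max aemeasurable_const).aestronglyMeasurable
  · exact hf.abs
  · intro t
    filter_upwards [hc0] with ω hω
    have h0 : (0:ℝ) ≤ max (f ω - t * c ω) 0 := le_max_right _ _
    have h1 : max (f ω - t * c ω) 0 ≤ |f ω| := by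
      have h2 : (0:ℝ) ≤ (t:ℝ) * c ω := by positivity
      have h3 := le_abs_self (f ω)
      exact max_le (by linarith) (abs_nonneg _)
    rw [Real.norm_eq_abs, abs_of_nonneg h0]
    exact h1
  · filter_upwards [hc0] with ω hω
    have h1 : Tendsto (fun t : ℕ => (t:ℝ) * c ω) atTop atTop :=
      Tendsto.atTop_mul_const hω tendsto_natCast_atTop_atTop
    apply Tendsto.congr' _ tendsto_const_nhds
    filter_upwards [h1.eventually_ge_atTop (f ω)] with t ht
    exact (max_eq_right (by linarith)).symm

/- ### The key uniform-integrability estimate, case (a) -/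

private lemma keyA {ξ : ℕ → Ω → ℝ} (hmeas : ∀ n, Measurable (ξ n))
    (hint : ∀ n, Integrable (ξ n)) (hswap : SwapInvariant ξ)
    {k : ℕ} (hk : ∀ᵐ ω, ξ k ω ≠ 0) {ε : ℝ} (hε : 0 < ε) :
    ∃ M : ℝ, 0 ≤ M ∧ ∀ i, ∫ ω, max (|ξ i ω| - M) 0 ≤ ε := by
  set j := k + 1 with hj
  have hjk : j ≠ k := Nat.succ_ne_self k
  -- Step 1 : choose a large multiplier t₀
  have h1 : Tendsto (fun t : ℕ => ∫ ω, max (|ξ j ω| - t * |ξ k ω|) 0) atTop (𝓝 0) :=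
    tendsto_tail (hint j).abs (hmeas j).abs.aemeasurable (hmeas k).abs.aemeasurable
      (hk.mono fun ω hω => abs_pos.2 hω)
  obtain ⟨T, hT, hT1⟩ :=
    ((h1.eventually (gt_mem_nhds (half_pos hε))).and (eventually_ge_atTop 1)).exists
  -- Step 2 : the same bound for every index i
  have hstep2 : ∀ i : ℕ, ∫ ω, max (|ξ i ω| - T * |ξ k ω|) 0 ≤ ε/2 := by
    intro i
    by_cases hik : i = k
    · subst hik
      have hz : ∀ ω, max (|ξ i ω| - T * |ξ i ω|) 0 = 0 := by
        intro ω
        have hT1' : (1:ℝ) ≤ T := by exact_mod_cast hT1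
        have := abs_nonneg (ξ i ω)
        exact max_eq_right (by nlinarith)
      rw [integral_congr_ae (Eventually.of_forall hz)]
      simp
      positivity
    · by_cases hij : i = j
      · subst hij; exact hT.le
      · have hTnn : (0:ℝ) ≤ (T:ℝ) := by positivity
        have e1 := int_identity (hint i) (hint k) (t := (T:ℝ)) hTnn
        have e2 := int_identity (hint j) (hint k) (t := (T:ℝ)) hTnn
        have s1 : ∫ ω, |ξ i ω + T * ξ k ω| = ∫ ω, |ξ j ω + T * ξ k ω| := by
          have := swap_pair hswap hik hjk hij 1 (T:ℝ)
          simpa using this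
        have s2 : ∫ ω, |ξ i ω - T * ξ k ω| = ∫ ω, |ξ j ω - T * ξ k ω| := by
          have := swap_pair hswap hik hjk hij 1 (-(T:ℝ))
          simpa [sub_eq_add_neg, neg_mul] using this
        rw [e1, s1, s2, ← e2]
        exact hT.le
  -- Step 3 : choose M
  have h3 : Tendsto (fun m : ℕ => ∫ ω, max ((fun ω => T * |ξ k ω|) ω - m * (1:ℝ)) 0)
      atTop (𝓝 0) :=
    tendsto_tail (c := fun _ => (1:ℝ)) ((hint k).abs.const_mul T)
      ((hmeas k).abs.aemeasurable.const_mul T) aemeasurable_const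
      (Eventually.of_forall fun _ => one_pos)
  obtain ⟨M, hM⟩ := (h3.eventually (gt_mem_nhds (half_pos hε))).exists
  refine ⟨M, by positivity, fun i => ?_⟩
  have int1 : Integrable (fun ω => max (|ξ i ω| - M) 0) :=
    ((hint i).abs.sub (integrable_const _)).pos_part
  have int2 : Integrable (fun ω => max (|ξ i ω| - T * |ξ k ω|) 0) :=
    ((hint i).abs.sub ((hint k).abs.const_mul T)).pos_part
  have int3 : Integrable (fun ω => max (T * |ξ k ω| - M) 0) :=
    (((hint k).abs.const_mul T).sub (integrable_const _)).pos_part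
  have pwb : ∀ ω, max (|ξ i ω| - M) 0
      ≤ max (|ξ i ω| - T * |ξ k ω|) 0 + max (T * |ξ k ω| - M) 0 :=
    fun ω => pw2 _ _ _
  calc ∫ ω, max (|ξ i ω| - M) 0
      ≤ ∫ ω, (max (|ξ i ω| - T * |ξ k ω|) 0 + max (T * |ξ k ω| - M) 0) :=
        integral_mono int1 (int2.add int3) pwb
    _ = (∫ ω, max (|ξ i ω| - T * |ξ k ω|) 0) + ∫ ω, max (T * |ξ k ω| - M) 0 :=
        integral_add int2 int3
    _ ≤ ε/2 + ε/2 := by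
        refine add_le_add (hstep2 i) ?_
        have := hM.le
        simpa [mul_one] using this
    _ = ε := by ring

/- ### The key uniform-integrability estimate, case (b) -/

private lemma keyB {ξ : ℕ → Ω → ℝ} (hmeas : ∀ n, Measurable (ξ n))
    (hint : ∀ n, Integrable (ξ n)) (hUI : UniformIntegrable ξ 1 ℙ)
    {ε : ℝ} (hε : 0 < ε) :
    ∃ M : ℝ, 0 ≤ M ∧ ∀ i, ∫ ω, max (|ξ i ω| - M) 0 ≤ ε := by
  obtain ⟨C, hC⟩ := hUI.spec one_ne_zero ENNReal.one_ne_top hε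
  refine ⟨C, C.coe_nonneg, fun i => ?_⟩
  set s : Set Ω := {x | C ≤ ‖ξ i x‖₊} with hs_def
  have hs : MeasurableSet s := measurableSet_le measurable_const (hmeas i).nnnorm
  have hind : Integrable (s.indicator (ξ i)) := (hint i).indicator hs
  have pwb : ∀ ω, max (|ξ i ω| - C) 0 ≤ ‖s.indicator (ξ i) ω‖ := by
    intro ω
    by_cases hω : ω ∈ s
    · rw [Set.indicator_of_mem hω, Real.norm_eq_abs]
      exact max_le (by linarith [C.coe_nonneg]) (abs_nonneg _)
    · rw [Set.indicator_of_notMem hω, norm_zero]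
      have hlt : |ξ i ω| < C := by
        have h1 : ¬ (C ≤ ‖ξ i ω‖₊) := hω
        have h2 : ‖ξ i ω‖₊ < C := lt_of_not_ge h1
        have h3 : (‖ξ i ω‖₊ : ℝ) < C := by exact_mod_cast h2
        simpa [coe_nnnorm, Real.norm_eq_abs] using h3
      exact max_le (by linarith) le_rfl
  have int1 : Integrable (fun ω => max (|ξ i ω| - C) 0) :=
    ((hint i).abs.sub (integrable_const _)).pos_part
  calc ∫ ω, max (|ξ i ω| - C) 0
      ≤ ∫ ω, ‖s.indicator (ξ i) ω‖ := integral_mono int1 hind.norm pwb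
    _ = (∫⁻ ω, ‖s.indicator (ξ i) ω‖₊ ∂ℙ).toReal := integral_norm_eq_lintegral_enorm hind.1
    _ = (eLpNorm (s.indicator (ξ i)) 1 ℙ).toReal := by simp only [eLpNorm_one_eq_lintegral_enorm, enorm_eq_nnnorm]
    _ ≤ (ENNReal.ofReal ε).toReal := ENNReal.toReal_mono ENNReal.ofReal_ne_top (hC i)
    _ = ε := ENNReal.toReal_ofReal hε.le

end Aux

/-- **Theorem 4.4 (L¹ convergence).** Let `ξ₁, ξ₂, …` be a swap-invariant sequence
of integrable random variables such that (a) `ξ_k ≠ 0` a.s. for some `k`, or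
(b) the sequence is uniformly integrable. Then the a.s. convergence of
`n⁻¹(ξ₁+⋯+ξₙ)` to the integrable random variable `X` also holds in `L¹`. -/
theorem swapInvariant_L1_convergence
    {Ω : Type*} [MeasureSpace Ω] [IsProbabilityMeasure (ℙ : Measure Ω)]
    (ξ : ℕ → Ω → ℝ) (hmeas : ∀ n, Measurable (ξ n)) (hint : ∀ n, Integrable (ξ n))
    (hswap : SwapInvariant ξ)
    (X : Ω → ℝ) (hXint : Integrable X)
    (hX : ∀ᵐ ω, Tendsto (fun n : ℕ => (n : ℝ)⁻¹ * ∑ i ∈ Finset.range n, ξ i ω)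
      atTop (nhds (X ω)))
    (hcond : (∃ k, ∀ᵐ ω, ξ k ω ≠ 0) ∨ UniformIntegrable ξ 1 ℙ) :
    Tendsto (fun n : ℕ => ∫ ω, |(n : ℝ)⁻¹ * ∑ i ∈ Finset.range n, ξ i ω - X ω|)
      atTop (nhds 0) := by
  classical
  set Z : ℕ → Ω → ℝ := fun n ω => (n:ℝ)⁻¹ * ∑ i ∈ Finset.range n, ξ i ω with hZ
  have Zmeas : ∀ n, Measurable (Z n) := fun n =>
    (Finset.measurable_sum _ fun i _ => hmeas i).const_mul _
  have Zint : ∀ n, Integrable (Z n) := fun n =>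
    (integrable_finset_sum _ fun i _ => hint i).const_mul _
  have key : ∀ ε' : ℝ, 0 < ε' → ∃ M : ℝ, 0 ≤ M ∧ ∀ i, ∫ ω, max (|ξ i ω| - M) 0 ≤ ε' := by
    intro ε' hε'
    rcases hcond with ⟨k, hk⟩ | hUI
    · exact keyA hmeas hint hswap hk hε'
    · exact keyB hmeas hint hUI hε'
  rw [Metric.tendsto_atTop]
  intro ε hε
  obtain ⟨M₀, hM₀0, hM₀⟩ := key (ε/5) (by positivity)
  -- tail of X
  have hXtail : Tendsto (fun m : ℕ => ∫ ω, max ((fun ω => |X ω|) ω - m * (1:ℝ)) 0)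
      atTop (𝓝 0) :=
    tendsto_tail (c := fun _ => (1:ℝ)) hXint.abs (hXint.abs).1.aemeasurable aemeasurable_const
      (Eventually.of_forall fun _ => one_pos)
  obtain ⟨M₁, hM₁⟩ := (hXtail.eventually (gt_mem_nhds (by positivity : (0:ℝ) < ε/5))).exists
  set M : ℝ := max M₀ (M₁ : ℝ) with hMdef
  have hM0 : 0 ≤ M := le_trans hM₀0 (le_max_left _ _)
  have intX : Integrable (fun ω => max (|X ω| - M) 0) :=
    (hXint.abs.sub (integrable_const _)).pos_part
  have hXM : ∫ ω, max (|X ω| - M) 0 ≤ ε/5 := by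
    have intX1 : Integrable (fun ω => max (|X ω| - (M₁:ℝ)) 0) :=
      (hXint.abs.sub (integrable_const _)).pos_part
    have hmono : ∀ ω, max (|X ω| - M) 0 ≤ max (|X ω| - (M₁:ℝ)) 0 := by
      intro ω
      have : (M₁:ℝ) ≤ M := le_max_right _ _
      exact max_le_max (by linarith) le_rfl
    refine le_trans (integral_mono intX intX1 hmono) ?_
    have := hM₁.le
    simpa [mul_one] using this
  -- bound for the averages
  have hZM : ∀ n : ℕ, 1 ≤ n → ∫ ω, max (|Z n ω| - M) 0 ≤ ε/5 := by
    intro n hn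
    have hn0 : (0:ℝ) < n := by exact_mod_cast Nat.pos_of_ne_zero (by omega)
    have intZ : Integrable (fun ω => max (|Z n ω| - M) 0) :=
      ((Zint n).abs.sub (integrable_const _)).pos_part
    have intS : Integrable (fun ω => (n:ℝ)⁻¹ * ∑ i ∈ Finset.range n, max (|ξ i ω| - M) 0) :=
      (integrable_finset_sum _ fun i _ =>
        ((hint i).abs.sub (integrable_const _)).pos_part).const_mul _
    have pwa : ∀ ω, max (|Z n ω| - M) 0
        ≤ (n:ℝ)⁻¹ * ∑ i ∈ Finset.range n, max (|ξ i ω| - M) 0 :=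
      fun ω => pwJ hn (fun i => ξ i ω) M
    have hterm : ∀ i, ∫ ω, max (|ξ i ω| - M) 0 ≤ ε/5 := by
      intro i
      have int1 : Integrable (fun ω => max (|ξ i ω| - M) 0) :=
        ((hint i).abs.sub (integrable_const _)).pos_part
      have int0 : Integrable (fun ω => max (|ξ i ω| - M₀) 0) :=
        ((hint i).abs.sub (integrable_const _)).pos_part
      have hmono : ∀ ω, max (|ξ i ω| - M) 0 ≤ max (|ξ i ω| - M₀) 0 := by
        intro ω
        have : M₀ ≤ M := le_max_left _ _
        exact max_le_max (by linarith) le_rfl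
      exact le_trans (integral_mono int1 int0 hmono) (hM₀ i)
    calc ∫ ω, max (|Z n ω| - M) 0
        ≤ ∫ ω, (n:ℝ)⁻¹ * ∑ i ∈ Finset.range n, max (|ξ i ω| - M) 0 :=
          integral_mono intZ intS pwa
      _ = (n:ℝ)⁻¹ * ∑ i ∈ Finset.range n, ∫ ω, max (|ξ i ω| - M) 0 := by
          rw [MeasureTheory.integral_const_mul, integral_finset_sum]
          intro i _
          exact ((hint i).abs.sub (integrable_const _)).pos_part
      _ ≤ (n:ℝ)⁻¹ * (n * (ε/5)) := by
          gcongr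
          calc ∑ i ∈ Finset.range n, ∫ ω, max (|ξ i ω| - M) 0
              ≤ ∑ i ∈ Finset.range n, (ε/5) := Finset.sum_le_sum fun i _ => hterm i
            _ = n * (ε/5) := by rw [Finset.sum_const, Finset.card_range]; ring
      _ = ε/5 := by field_simp
  -- the truncated part tends to zero
  have hmin : Tendsto (fun n : ℕ => ∫ ω, min (|Z n ω - X ω|) (2*M)) atTop (𝓝 0) := by
    have main := tendsto_integral_of_dominated_convergence (μ := ℙ)
        (F := fun (n : ℕ) ω => min (|Z n ω - X ω|) (2*M)) (f := fun _ => (0:ℝ))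
        (bound := fun _ => 2*M) ?_ ?_ ?_ ?_
    · simpa using main
    · intro n
      exact (((((Zint n).sub hXint).abs).1.aemeasurable).min
        aemeasurable_const).aestronglyMeasurable
    · exact integrable_const _
    · intro n
      refine Eventually.of_forall fun ω => ?_
      have h0 : (0:ℝ) ≤ min (|Z n ω - X ω|) (2*M) :=
        le_min (abs_nonneg _) (by linarith)
      rw [Real.norm_eq_abs, abs_of_nonneg h0]
      exact min_le_right _ _
    · filter_upwards [hX] with ω hω
      have h1 : Tendsto (fun n : ℕ => |Z n ω - X ω|) atTop (𝓝 0) := by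
        have := (hω.sub (tendsto_const_nhds (x := X ω))).abs
        simpa using this
      have h2 := h1.min (tendsto_const_nhds (x := 2*M))
      simpa [min_eq_left (by linarith : (0:ℝ) ≤ 2*M)] using h2
  obtain ⟨N₁, hN₁⟩ := eventually_atTop.1
    (hmin.eventually (gt_mem_nhds (by positivity : (0:ℝ) < ε/5)))
  refine ⟨max N₁ 1, fun n hn => ?_⟩
  have hn1 : 1 ≤ n := le_trans (le_max_right _ _) hn
  have hnN : N₁ ≤ n := le_trans (le_max_left _ _) hn
  have intabs : Integrable (fun ω => |Z n ω - X ω|) := ((Zint n).sub hXint).abs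
  have intmin : Integrable (fun ω => min (|Z n ω - X ω|) (2*M)) := by
    refine Integrable.mono intabs
      (((intabs.1.aemeasurable).min aemeasurable_const).aestronglyMeasurable) ?_
    refine Eventually.of_forall fun ω => ?_
    have h0 : (0:ℝ) ≤ min (|Z n ω - X ω|) (2*M) := le_min (abs_nonneg _) (by linarith)
    rw [Real.norm_eq_abs, abs_of_nonneg h0, Real.norm_eq_abs, abs_abs]
    exact min_le_left _ _
  have intZM : Integrable (fun ω => max (|Z n ω| - M) 0) :=
    ((Zint n).abs.sub (integrable_const _)).pos_part
  have pwt : ∀ ω, |Z n ω - X ω|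
      ≤ min (|Z n ω - X ω|) (2*M) + max (|Z n ω| - M) 0 + max (|X ω| - M) 0 :=
    fun ω => pw3 (Z n ω) (X ω) M
  have hle : ∫ ω, |Z n ω - X ω| ≤ ε/5 + ε/5 + ε/5 := by
    calc ∫ ω, |Z n ω - X ω|
        ≤ ∫ ω, (min (|Z n ω - X ω|) (2*M) + max (|Z n ω| - M) 0 + max (|X ω| - M) 0) :=
          integral_mono intabs ((intmin.add intZM).add intX) pwt
      _ = (∫ ω, (min (|Z n ω - X ω|) (2*M) + max (|Z n ω| - M) 0)) + ∫ ω, max (|X ω| - M) 0 :=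
          integral_add (intmin.add intZM) intX
      _ = ((∫ ω, min (|Z n ω - X ω|) (2*M)) + ∫ ω, max (|Z n ω| - M) 0)
            + ∫ ω, max (|X ω| - M) 0 := by rw [integral_add intmin intZM]
      _ ≤ ε/5 + ε/5 + ε/5 := by
          refine add_le_add (add_le_add ?_ (hZM n hn1)) hXM
          exact (hN₁ n hnN).le
  have hnonneg : (0:ℝ) ≤ ∫ ω, |Z n ω - X ω| :=
    integral_nonneg fun ω => abs_nonneg _
  rw [Real.dist_eq, sub_zero, abs_of_nonneg hnonneg]
  linarith
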